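/- Suppose a spacelike graph with parallel mean curvature H satisfies, for every p and r > 0, the Heinz–Chern inequality m‖H‖ ≤ sup_{B_r(p)} cosh θ · 𝔥(B_r(p)). If the base (Σ₁,g₁) is complete with 𝔥(B_r(p)) ≤ C/r and cosh θ(x) = o(r(x)) as r → ∞, then H = 0. -/

import Mathlib

open Metric

/-- Suppose a spacelike graph with parallel mean curvature `H` satisfies
the Heinz–Chern inequality `m‖H‖ ≤ sup_{B_r(p)} cosh θ · 𝔥(B_r(p))` for every `r > 0`.
If the base `(S1,g₁)` is complete with `𝔥(B_r(p)) ≤ C/r` and `cosh θ(x) = o(r(x))` as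
`r(x) = dist(p,x) → ∞`, then `H = 0` (i.e. `‖H‖ = 0`, the graph is maximal). -/
theorem stmt11 (S1 : Type*) [MetricSpace S1] [CompleteSpace S1]
    (m : ℕ) (hm : 2 ≤ m) (p : S1)
    (coshθ : S1 → ℝ) (hcosh1 : ∀ x, 1 ≤ coshθ x)
    (cheeger : ℝ → ℝ) (hcheeger_nonneg : ∀ r, 0 < r → 0 ≤ cheeger r)
    (normH : ℝ) (hnormH : 0 ≤ normH)
    (hHC : ∀ r : ℝ, 0 < r →
      (m : ℝ) * normH ≤ sSup (coshθ '' ball p r) * cheeger r)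
    (C : ℝ) (hC : 0 < C) (hch : ∀ r : ℝ, 0 < r → cheeger r ≤ C / r)
    (hlittleo : ∀ ε : ℝ, 0 < ε → ∃ R : ℝ, 0 < R ∧ ∀ x : S1, R ≤ dist p x →
      coshθ x ≤ ε * dist p x) :
    normH = 0 := by
  have hm0 : (0:ℝ) < m := by positivity
  -- key: for every ε > 0, m * normH ≤ C * ε
  have key : ∀ ε : ℝ, 0 < ε → (m : ℝ) * normH ≤ C * ε := by
    intro ε hε
    obtain ⟨R, hR, hRbound⟩ := hlittleo ε hε
    by_cases hbdd : BddAbove (coshθ '' ball p R)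
    · -- bounded case
      set M := sSup (coshθ '' ball p R) with hM
      set r := max R (M / ε) + 1 with hr
      have hRr : R ≤ r := by rw [hr]; linarith [le_max_left R (M/ε)]
      have hr0 : 0 < r := lt_of_lt_of_le hR hRr
      have hεr : M ≤ ε * r := by
        have h1 : M / ε ≤ r := by rw [hr]; linarith [le_max_right R (M/ε)]
        calc M = ε * (M / ε) := by field_simp
        _ ≤ ε * r := by exact mul_le_mul_of_nonneg_left h1 hε.le
      have hsup : sSup (coshθ '' ball p r) ≤ ε * r := by
        apply Real.sSup_le
        · rintro y ⟨x, hx, rfl⟩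
          rcases lt_or_ge (dist p x) R with h | h
          · have hxR : x ∈ ball p R := by rwa [mem_ball, dist_comm]
            exact le_trans (le_csSup hbdd ⟨x, hxR, rfl⟩) hεr
          · calc coshθ x ≤ ε * dist p x := hRbound x h
            _ ≤ ε * r := by
                have : dist p x < r := by rw [mem_ball, dist_comm] at hx; exact hx
                exact mul_le_mul_of_nonneg_left this.le hε.le
        · positivity
      have hcheeg := hch r hr0
      have hcn := hcheeger_nonneg r hr0
      calc (m : ℝ) * normH ≤ sSup (coshθ '' ball p r) * cheeger r := hHC r hr0
      _ ≤ (ε * r) * cheeger r := mul_le_mul_of_nonneg_right hsup hcn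
      _ ≤ (ε * r) * (C / r) := by
          exact mul_le_mul_of_nonneg_left hcheeg (by positivity)
      _ = C * ε := by field_simp
    · -- unbounded case: the sup over a larger ball is the junk value 0
      have hsub : coshθ '' ball p R ⊆ coshθ '' ball p (R + 1) :=
        Set.image_mono (ball_subset_ball (by linarith))
      have hnb : ¬ BddAbove (coshθ '' ball p (R + 1)) := fun h => hbdd (h.mono hsub)
      have hjunk : sSup (coshθ '' ball p (R + 1)) = 0 := Real.sSup_of_not_bddAbove hnb
      have := hHC (R + 1) (by linarith)
      rw [hjunk, zero_mul] at this
      calc (m : ℝ) * normH ≤ 0 := this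
      _ ≤ C * ε := by positivity
  -- conclude normH = 0
  by_contra h
  have hpos : 0 < normH := lt_of_le_of_ne hnormH (Ne.symm h)
  have hε : 0 < (m : ℝ) * normH / (2 * C) := by positivity
  have := key _ hε
  have : (m : ℝ) * normH ≤ (m : ℝ) * normH / 2 := by
    calc (m : ℝ) * normH ≤ C * ((m : ℝ) * normH / (2 * C)) := this
    _ = (m : ℝ) * normH / 2 := by field_simp
  nlinarith
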